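/- Let r ≥ 2 and s_0 ≤ s_1 ≤ … ≤ s_{r-1} be positive integers. If G is a graph with d_t(G) ≥ s_0 and H contains the complete multipartite graph K_{s_0,s_1,…,s_{r-1}} as a spanning subgraph, then d_t(G □ H) ≥ r·s_0. -/

import Mathlib

open SimpleGraph Finset
open Fin.NatCast

/-- A domatic `k`-coloring: every vertex sees all `k` colors in its closed neighborhood. -/
def IsDomaticColoring {V : Type*} (G : SimpleGraph V) (k : ℕ) (f : V → Fin k) : Prop :=
  ∀ v : V, ∀ c : Fin k, ∃ u : V, (u = v ∨ G.Adj v u) ∧ f u = c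

/-- A total domatic `k`-coloring: every vertex sees all `k` colors in its open neighborhood. -/
def IsTotalDomaticColoring {V : Type*} (G : SimpleGraph V) (k : ℕ) (f : V → Fin k) : Prop :=
  ∀ v : V, ∀ c : Fin k, ∃ u : V, G.Adj v u ∧ f u = c

/-- The domatic number `d(G)`. -/
noncomputable def domaticNumber {V : Type*} (G : SimpleGraph V) : ℕ :=
  sSup {k | ∃ f : V → Fin k, IsDomaticColoring G k f}

/-- The total domatic number `d_t(G)`. -/
noncomputable def totalDomaticNumber {V : Type*} (G : SimpleGraph V) : ℕ :=
  sSup {k | ∃ f : V → Fin k, IsTotalDomaticColoring G k f}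

def IsDominatingSet {V : Type*} (G : SimpleGraph V) (D : Set V) : Prop :=
  ∀ v : V, v ∈ D ∨ ∃ u ∈ D, G.Adj v u

def IsTotalDominatingSet {V : Type*} (G : SimpleGraph V) (D : Set V) : Prop :=
  ∀ v : V, ∃ u ∈ D, G.Adj v u

noncomputable def dominationNumber {V : Type*} (G : SimpleGraph V) [Fintype V] : ℕ :=
  sInf {n | ∃ D : Finset V, D.card = n ∧ IsDominatingSet G ↑D}

noncomputable def totalDominationNumber {V : Type*} (G : SimpleGraph V) [Fintype V] : ℕ :=
  sInf {n | ∃ D : Finset V, D.card = n ∧ IsTotalDominatingSet G ↑D}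

/-- An injective `k`-coloring: vertices with a common neighbor get distinct colors. -/
def IsInjectiveColoring {V : Type*} (G : SimpleGraph V) (k : ℕ) (f : V → Fin k) : Prop :=
  ∀ u w v : V, G.Adj v u → G.Adj v w → u ≠ w → f u ≠ f w

noncomputable def injChromaticNumber {V : Type*} (G : SimpleGraph V) : ℕ :=
  sInf {k | ∃ f : V → Fin k, IsInjectiveColoring G k f}

def NoIsolated {V : Type*} (G : SimpleGraph V) : Prop := ∀ v : V, ∃ u, G.Adj v u

/-- The Hamming graph `H(n,q)`: vertices differ in exactly one coordinate. -/
def hammingGraph (n q : ℕ) : SimpleGraph (Fin n → Fin q) :=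
  SimpleGraph.fromRel (fun x y => ∃ i, x i ≠ y i ∧ ∀ j, j ≠ i → x j = y j)

/-- The hypercube `Q n`. -/
def hypercube (n : ℕ) : SimpleGraph (Fin n → Fin 2) := hammingGraph n 2

/-- The torus `C_{k 0} □ ⋯ □ C_{k (d-1)}`. -/
def torusGraph (d : ℕ) (k : Fin d → ℕ) : SimpleGraph (∀ i : Fin d, ZMod (k i)) :=
  SimpleGraph.fromRel (fun x y => ∃ i, x i = y i + 1 ∧ ∀ j, j ≠ i → x j = y j)


lemma totalDomatic_bddAbove {V : Type*} [Fintype V] [Nonempty V] (G : SimpleGraph V) :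
    BddAbove {k | ∃ f : V → Fin k, IsTotalDomaticColoring G k f} := by
  refine ⟨Fintype.card V, fun k hk => ?_⟩
  obtain ⟨f, hf⟩ := hk
  have hsurj : Function.Surjective f := fun c => by
    obtain ⟨u, _, hu⟩ := hf (Classical.arbitrary V) c
    exact ⟨u, hu⟩
  simpa using Fintype.card_le_of_surjective f hsurj

lemma totalDomatic_mono {V : Type*} (G : SimpleGraph V) {k k' : ℕ} (hk : 0 < k) (hkk' : k ≤ k')
    {f : V → Fin k'} (hf : IsTotalDomaticColoring G k' f) :
    ∃ g : V → Fin k, IsTotalDomaticColoring G k g := by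
  refine ⟨fun v => if h : (f v : ℕ) < k then ⟨f v, h⟩ else ⟨0, hk⟩, fun v c => ?_⟩
  obtain ⟨u, hu, hfu⟩ := hf v ⟨c, lt_of_lt_of_le c.2 hkk'⟩
  refine ⟨u, hu, ?_⟩
  simp only [hfu]
  exact Fin.ext (by simp [c.is_lt])

theorem totalDomatic_boxProd_multipartite {V W : Type*} [Fintype V] [Fintype W]
    (G : SimpleGraph V) (H : SimpleGraph W) (r : ℕ) (hr : 2 ≤ r)
    (s : Fin r → ℕ) (hpos : ∀ i, 0 < s i) (hmono : Monotone s)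
    (hG : NoIsolated G)
    (hdt : s ⟨0, by omega⟩ ≤ totalDomaticNumber G)
    (e : (Σ i : Fin r, Fin (s i)) ≃ W)
    (hspan : ∀ a b, (completeMultipartiteGraph (fun i : Fin r => Fin (s i))).Adj a b →
      H.Adj (e a) (e b)) :
    r * s ⟨0, by omega⟩ ≤ totalDomaticNumber (G □ H) := by
  classical
  have h0r : (0 : ℕ) < r := by omega
  set s0 := s ⟨0, by omega⟩ with hs0def
  have hs0pos : 0 < s0 := hpos _
  haveI : NeZero s0 := ⟨hs0pos.ne'⟩
  -- V is nonempty
  have hVne : Nonempty V := by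
    by_contra hV
    rw [not_nonempty_iff] at hV
    have hub : ¬ BddAbove {k | ∃ f : V → Fin k, IsTotalDomaticColoring G k f} := by
      rintro ⟨b, hb⟩
      have : b + 1 ∈ {k | ∃ f : V → Fin k, IsTotalDomaticColoring G k f} :=
        ⟨fun v => isEmptyElim v, fun v => isEmptyElim v⟩
      exact absurd (hb this) (by omega)
    have : totalDomaticNumber G = 0 := by
      rw [totalDomaticNumber, csSup_of_not_bddAbove hub]
      exact csSup_empty
    omega
  haveI := hVne
  have hWne : Nonempty W := ⟨e ⟨⟨0, by omega⟩, ⟨0, hpos _⟩⟩⟩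
  -- extract a total domatic coloring of G with s0 colors
  have hbddG := totalDomatic_bddAbove G
  have h1 : 1 ∈ {k | ∃ f : V → Fin k, IsTotalDomaticColoring G k f} := by
    refine ⟨fun _ => 0, fun v c => ?_⟩
    obtain ⟨u, hu⟩ := hG v
    exact ⟨u, hu, Subsingleton.elim _ _⟩
  have hmem := Nat.sSup_mem ⟨1, h1⟩ hbddG
  obtain ⟨f', hf'⟩ := hmem
  obtain ⟨f, hf⟩ := totalDomatic_mono G hs0pos hdt hf'
  -- build the coloring of G □ H
  set F : V × W → Fin (r * s0) := fun p =>
    finProdFinEquiv ((e.symm p.2).1, f p.1 + ((((e.symm p.2).2 : ℕ)) : Fin s0)) with hFdef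
  have hFdom : IsTotalDomaticColoring (G □ H) (r * s0) F := by
    rintro ⟨v, w⟩ d
    set d' := finProdFinEquiv.symm d with hd'
    have hdback : finProdFinEquiv d' = d := Equiv.apply_symm_apply _ _
    by_cases h : d'.1 = (e.symm w).1
    · -- move in the G coordinate
      obtain ⟨v', hadj, hfv'⟩ := hf v (d'.2 - ((((e.symm w).2 : ℕ)) : Fin s0))
      refine ⟨(v', w), Or.inl ⟨hadj, rfl⟩, ?_⟩
      have : F (v', w) = finProdFinEquiv (d'.1, d'.2) := by
        simp only [hFdef, hfv', sub_add_cancel, h]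
      rw [this, Prod.mk.eta, hdback]
    · -- move in the H coordinate
      have hle : s0 ≤ s d'.1 := hmono (by simp [Fin.le_def])
      set c0 : Fin s0 := d'.2 - f v with hc0
      set j' : Fin (s d'.1) := ⟨(c0 : ℕ), lt_of_lt_of_le c0.2 hle⟩ with hj'
      have hadj : H.Adj w (e ⟨d'.1, j'⟩) := by
        have := hspan (e.symm w) ⟨d'.1, j'⟩ (fun heq => h heq.symm)
        simpa using this
      refine ⟨(v, e ⟨d'.1, j'⟩), Or.inr ⟨hadj, rfl⟩, ?_⟩
      have hsymm : e.symm (e ⟨d'.1, j'⟩) = ⟨d'.1, j'⟩ := Equiv.symm_apply_apply _ _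
      have hnat : (((e.symm (e ⟨d'.1, j'⟩)).2 : ℕ)) = (c0 : ℕ) := by rw [hsymm]
      have : F (v, e ⟨d'.1, j'⟩) = finProdFinEquiv (d'.1, d'.2) := by
        simp only [hFdef, Equiv.symm_apply_apply, hnat, Fin.cast_val_eq_self, hc0,
          add_sub_cancel]
      rw [this, Prod.mk.eta, hdback]
  refine le_csSup (totalDomatic_bddAbove (G □ H)) ⟨F, hFdom⟩
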